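/- Say κ ∈ ℂ is exponentially κ-bounded for n steps if Re(κ) ≥ 4, |Im(E_κ^{k-1}(κ))| < F^{k-1}(Re(κ) - 2) for 1 ≤ k ≤ n, and Re(E_κ^{k-1}(κ)) > 0 for 1 ≤ k ≤ n-1. If κ is exponentially κ-bounded for n ≥ 1 steps, then |Re(E_κ^k(κ))| ≥ F^k(Re(κ) - 1) for all 0 ≤ k ≤ n-1. -/

import Mathlib

/-- Model function for exponential growth: F(t) = e^t - 1. -/
noncomputable def F (t : ℝ) : ℝ := Real.exp t - 1

/-- The exponential map E_κ(z) = exp(z) + κ. -/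
noncomputable def E (κ : ℂ) (z : ℂ) : ℂ := Complex.exp z + κ

/-- κ is exponentially κ-bounded for n steps: Re(κ) ≥ 4,
    |Im(E_κ^{k-1}(κ))| < F^{k-1}(Re(κ) - 2) for 1 ≤ k ≤ n, and
    Re(E_κ^{k-1}(κ)) > 0 for 1 ≤ k ≤ n - 1. -/
def ExpBounded (κ : ℂ) (n : ℕ) : Prop :=
  4 ≤ κ.re ∧
  (∀ k : ℕ, k < n → |((E κ)^[k] κ).im| < F^[k] (κ.re - 2)) ∧
  (∀ k : ℕ, k + 1 < n → 0 < ((E κ)^[k] κ).re)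

lemma F_ge_self (s : ℝ) : s ≤ F s := by
  have := Real.add_one_le_exp s
  simp only [F]; linarith

lemma F_mono : Monotone F := fun a b hab => by
  simp only [F]; have := Real.exp_le_exp.2 hab; linarith

lemma F_iter_ge_self (k : ℕ) (s : ℝ) : s ≤ F^[k] s := by
  induction k with
  | zero => simp
  | succ k ih =>
    rw [Function.iterate_succ_apply']
    exact le_trans ih (F_ge_self _)

lemma F_iter_mono (k : ℕ) : Monotone (F^[k]) := Monotone.iterate F_mono k

lemma F_iter_add_one (k : ℕ) : ∀ s : ℝ, 0 ≤ s → F^[k] s + 1 ≤ F^[k] (s + 1) := by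
  induction k with
  | zero => intro s _; simp
  | succ k ih =>
    intro s hs
    rw [Function.iterate_succ_apply, Function.iterate_succ_apply]
    have h1 : F s + 1 ≤ F (s + 1) := by
      simp only [F]
      have h2 : Real.exp s * Real.exp 1 = Real.exp (s + 1) := (Real.exp_add s 1).symm
      have h3 : 1 ≤ Real.exp s := Real.one_le_exp hs
      have h4 : (2.7182818283 : ℝ) < Real.exp 1 := Real.exp_one_gt_d9
      nlinarith
    have h5 : 0 ≤ F s := le_trans hs (F_ge_self s)
    calc F^[k] (F s) + 1 ≤ F^[k] (F s + 1) := ih (F s) h5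
      _ ≤ F^[k] (F (s + 1)) := F_iter_mono k h1

lemma key_ineq (t A B X : ℝ) (ht : 4 ≤ t) (hB : t - 1 ≤ B)
    (hAB : Real.exp 1 * B ≤ A) (hX : Real.exp 1 * A ≤ X) :
    (A + t) ^ 2 + (B + t - 3) ^ 2 ≤ X ^ 2 := by
  have he : (2.7 : ℝ) ≤ Real.exp 1 := by
    have := Real.exp_one_gt_d9; linarith
  have hB0 : (3 : ℝ) ≤ B := by linarith
  have hA : 2.7 * B ≤ A := by nlinarith
  have hA0 : (8 : ℝ) ≤ A := by nlinarith
  have hXA : 2.7 * A ≤ X := by nlinarith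
  have hX2 : (2.7 * A) ^ 2 ≤ X ^ 2 := by
    apply pow_le_pow_left₀ (by nlinarith) hXA
  nlinarith [sq_nonneg (A - 2.7 * B), sq_nonneg (B - 3)]

/-- If κ is exponentially κ-bounded for n ≥ 1 steps, then
    |Re(E_κ^k(κ))| ≥ F^k(Re(κ) - 1) for all 0 ≤ k ≤ n - 1. -/
theorem re_iterate_lower_bound (κ : ℂ) (n : ℕ) (hn : 1 ≤ n) (h : ExpBounded κ n) :
    ∀ k : ℕ, k < n → |((E κ)^[k] κ).re| ≥ F^[k] (κ.re - 1) := by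
  obtain ⟨h4, him, hre⟩ := h
  set t := κ.re with ht
  have main : ∀ k : ℕ, k < n → F^[k] (t - 1) + 1 ≤ |((E κ)^[k] κ).re| := by
    intro k
    induction k with
    | zero =>
      intro _
      simp only [Function.iterate_zero, id_eq]
      rw [abs_of_nonneg (by linarith)]
      linarith
    | succ k IH =>
      intro hk1
      have hkn : k < n := Nat.lt_of_succ_lt hk1
      have hxpos : 0 < ((E κ)^[k] κ).re := hre k hk1
      set z := (E κ)^[k] κ with hz
      set a := F^[k] (t - 1) with ha
      set b := F^[k] (t - 2) with hb
      have hx : a + 1 ≤ z.re := by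
        have := IH hkn
        rwa [abs_of_pos hxpos] at this
      have hbt : t - 2 ≤ b := F_iter_ge_self k (t - 2)
      have hab : b + 1 ≤ a := by
        have h1 := F_iter_add_one k (t - 2) (by linarith)
        have h2 : (t - 2) + 1 = t - 1 := by ring
        rw [h2] at h1
        linarith
      have hreE : ((E κ)^[k + 1] κ).re = Real.exp z.re * Real.cos z.im + t := by
        rw [Function.iterate_succ_apply', ← hz]
        simp [E, Complex.add_re, Complex.exp_re]
        exact ht.symm
      have himE : ((E κ)^[k + 1] κ).im = Real.exp z.re * Real.sin z.im + κ.im := by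
        rw [Function.iterate_succ_apply', ← hz]
        simp [E, Complex.add_im, Complex.exp_im]
      set X := Real.exp z.re with hX
      have hXa : Real.exp 1 * Real.exp a ≤ X := by
        have h1 : Real.exp (a + 1) ≤ Real.exp z.re := Real.exp_le_exp.2 hx
        rw [Real.exp_add] at h1
        rw [hX]
        linarith
      have him1 : |((E κ)^[k + 1] κ).im| < Real.exp b - 1 := by
        have h1 := him (k + 1) hk1
        have h2 : F^[k + 1] (t - 2) = F (F^[k] (t - 2)) :=
          Function.iterate_succ_apply' F k (t - 2)
        rw [h2] at h1
        simpa [F, ← hb] using h1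
      have him0 : |κ.im| < t - 2 := by
        have := him 0 (by omega)
        simpa using this
      have hS : X * |Real.sin z.im| ≤ Real.exp b + t - 3 := by
        have h1 : X * Real.sin z.im = ((E κ)^[k + 1] κ).im - κ.im := by
          rw [himE]; ring
        have h2 : |X * Real.sin z.im| ≤ |((E κ)^[k + 1] κ).im| + |κ.im| := by
          rw [h1]; exact abs_sub _ _
        rw [abs_mul, abs_of_nonneg (Real.exp_nonneg _)] at h2
        linarith
      have hBt : t - 1 ≤ Real.exp b := by
        have h1 := Real.add_one_le_exp (t - 2)
        have h2 : Real.exp (t - 2) ≤ Real.exp b := Real.exp_le_exp.2 hbt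
        linarith
      have hABe : Real.exp 1 * Real.exp b ≤ Real.exp a := by
        have h1 : Real.exp (b + 1) ≤ Real.exp a := Real.exp_le_exp.2 hab
        rw [Real.exp_add] at h1
        linarith
      have hkey := key_ineq t (Real.exp a) (Real.exp b) X h4 hBt hABe hXa
      have hsin0 : 0 ≤ X * |Real.sin z.im| := by positivity
      have hC2 : (Real.exp a + t) ^ 2 ≤ (X * |Real.cos z.im|) ^ 2 := by
        have hpyth : (X * |Real.cos z.im|) ^ 2 + (X * |Real.sin z.im|) ^ 2 = X ^ 2 := by
          have hsc := Real.sin_sq_add_cos_sq z.im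
          rw [mul_pow, mul_pow, sq_abs, sq_abs]
          nlinarith
        have hS2 : (X * |Real.sin z.im|) ^ 2 ≤ (Real.exp b + t - 3) ^ 2 := by
          apply pow_le_pow_left₀ hsin0 hS
        nlinarith
      have hC : Real.exp a + t ≤ X * |Real.cos z.im| := by
        have h0 : (0 : ℝ) ≤ X * |Real.cos z.im| := by positivity
        exact le_of_pow_le_pow_left₀ two_ne_zero h0 hC2
      have hgoal : F^[k + 1] (t - 1) + 1 = Real.exp a := by
        have h2 : F^[k + 1] (t - 1) = F (F^[k] (t - 1)) :=
          Function.iterate_succ_apply' F k (t - 1)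
        rw [h2, ← ha]
        simp [F]
      rw [hgoal, hreE]
      have hX0 : (0 : ℝ) ≤ X := hX ▸ Real.exp_nonneg z.re
      have hXc : |X * Real.cos z.im| = X * |Real.cos z.im| := by
        rw [abs_mul, abs_of_nonneg hX0]
      have h3 := abs_add_le (X * Real.cos z.im + t) (-t)
      simp only [add_neg_cancel_right, abs_neg] at h3
      rw [hXc, abs_of_nonneg (by linarith : (0:ℝ) ≤ t)] at h3
      linarith
  intro k hk
  have := main k hk
  linarith [this]
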